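/- Divisibility in the combinatorial implementation of Probabilistic Serial: consider the combinatorial implementation of PS on any profile ≻ of strict orderings of n agents over m divisible goods, terminating after K steps. Then for every k ∈ {0, 1, …, K}, the quantity t^{(k)}·(n!)^k is an integer, and moreover x^{(k)}_{a,g}·(n!)^k is an integer for all agents a ∈ [n] and goods g ∈ [m]. -/

import Mathlib

/-- A strict total ordering over goods, given as a list from most preferred to
least preferred: it must be a duplicate-free enumeration of all goods. -/
def IsOrder {γ : Type*} [Fintype γ] (l : List γ) : Prop :=
  l.Nodup ∧ ∀ g : γ, g ∈ l

/-- An additive valuation `v` (given by its values on single goods) is consistent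
with the strict ordering `l` if strictly more valuable goods appear earlier. -/
def Consistent {γ : Type*} [DecidableEq γ] (v : γ → ℝ) (l : List γ) : Prop :=
  ∀ g g' : γ, v g > v g' → l.idxOf g < l.idxOf g'

/-- Agent `a`'s most preferred good in the set `S` of available goods. -/
def psTop {n m : ℕ} (pref : Fin n → List (Fin m)) (S : Finset (Fin m)) (a : Fin n) :
    Option (Fin m) :=
  (pref a).find? (fun g => decide (g ∈ S))

/-- `N(g, S)`: the set of agents whose most preferred available good is `g`. -/
def psN {n m : ℕ} (pref : Fin n → List (Fin m)) (S : Finset (Fin m)) (g : Fin m) :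
    Finset (Fin n) :=
  Finset.univ.filter (fun a => psTop pref S a = some g)

/-- The available goods currently being eaten by at least one agent. -/
def psActive {n m : ℕ} (pref : Fin n → List (Fin m)) (S : Finset (Fin m)) :
    Finset (Fin m) :=
  S.filter (fun g => (psN pref S g).Nonempty)

open scoped Classical in
/-- Combinatorial implementation of Probabilistic Serial.
`psState pref k = (S⁽ᵏ⁾, x⁽ᵏ⁾, t⁽ᵏ⁾)`: after step `k`, the set of available
goods, the partial allocation, and the length `t⁽ᵏ⁾` of step `k` (with `t⁽⁰⁾ = 0`). -/
noncomputable def psState {n m : ℕ} (pref : Fin n → List (Fin m)) :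
    ℕ → Finset (Fin m) × (Fin n → Fin m → ℝ) × ℝ
  | 0 => (Finset.univ, fun _ _ => 0, 0)
  | k + 1 =>
    let st := psState pref k
    let tg : Fin m → ℝ := fun g => (1 - ∑ a, st.2.1 a g) / ((psN pref st.1 g).card : ℝ)
    if h : (psActive pref st.1).Nonempty then
      let t := (psActive pref st.1).inf' h tg
      (st.1.filter (fun g => ¬(g ∈ psActive pref st.1 ∧ tg g = t)),
        fun a g => if psTop pref st.1 a = some g then st.2.1 a g + t else st.2.1 a g,
        t)
    else st

/-- The fractional allocation output by Probabilistic Serial (the mechanism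
terminates after at most `m` steps, since each step fully consumes a good). -/
noncomputable def psAlloc {n m : ℕ} (pref : Fin n → List (Fin m)) :
    Fin n → Fin m → ℝ :=
  (psState pref m).2.1

/-- in the combinatorial implementation of Probabilistic Serial,
`t⁽ᵏ⁾·(n!)^k` and every `x⁽ᵏ⁾_{a,g}·(n!)^k` are integers, for all `k ≤ K`. -/
theorem stmt11 (n m : ℕ) (hn : 0 < n) (pref : Fin n → List (Fin m))
    (horder : ∀ a, IsOrder (pref a))
    (K : ℕ) (hK : (psState pref K).1 = ∅)
    (hK' : ∀ k < K, (psState pref k).1 ≠ ∅) :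
    ∀ k ≤ K,
      (∃ z : ℤ, (psState pref k).2.2 * (n.factorial : ℝ) ^ k = (z : ℝ)) ∧
        ∀ (a : Fin n) (g : Fin m),
          ∃ z : ℤ, (psState pref k).2.1 a g * (n.factorial : ℝ) ^ k = (z : ℝ) := by

  have key : ∀ k : ℕ,
      (∃ z : ℤ, (psState pref k).2.2 * (n.factorial : ℝ) ^ k = (z : ℝ)) ∧
        ∀ (a : Fin n) (g : Fin m),
          ∃ z : ℤ, (psState pref k).2.1 a g * (n.factorial : ℝ) ^ k = (z : ℝ) := by
    intro k
    induction k with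
    | zero => exact ⟨⟨0, by simp [psState]⟩, fun a g => ⟨0, by simp [psState]⟩⟩
    | succ k ih =>
      obtain ⟨⟨zt, hzt⟩, hx⟩ := ih
      set st := psState pref k with hst
      set tg : Fin m → ℝ := fun g => (1 - ∑ a, st.2.1 a g) / ((psN pref st.1 g).card : ℝ)
        with htgdef
      by_cases h : (psActive pref st.1).Nonempty
      · set t := (psActive pref st.1).inf' h tg with htdef
        have hdef : psState pref (k+1) =
            (st.1.filter (fun g => ¬(g ∈ psActive pref st.1 ∧ tg g = t)),
              fun a g => if psTop pref st.1 a = some g then st.2.1 a g + t else st.2.1 a g,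
              t) := by
          rw [psState]
          simp only [← hst, ← htgdef, dif_pos h, ← htdef]
          rfl
        have htg : ∀ g ∈ psActive pref st.1,
            ∃ z : ℤ, tg g * (n.factorial : ℝ) ^ (k+1) = (z : ℝ) := by
          intro g hg
          have hgN : (psN pref st.1 g).Nonempty := (Finset.mem_filter.mp hg).2
          have hcard : 0 < (psN pref st.1 g).card := Finset.card_pos.mpr hgN
          have hle : (psN pref st.1 g).card ≤ n := by
            simpa using Finset.card_le_card (Finset.subset_univ (psN pref st.1 g))
          obtain ⟨q, hq⟩ := Nat.dvd_factorial hcard hle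
          choose f hf using fun a => hx a g
          have hsum : (∑ a, st.2.1 a g) * (n.factorial : ℝ) ^ k = ((∑ a, f a : ℤ) : ℝ) := by
            rw [Finset.sum_mul]; push_cast
            exact Finset.sum_congr rfl fun a _ => hf a
          refine ⟨((n.factorial : ℤ) ^ k - ∑ a, f a) * q, ?_⟩
          have hc : ((psN pref st.1 g).card : ℝ) ≠ 0 := Nat.cast_ne_zero.mpr hcard.ne'
          have hFq : (n.factorial : ℝ) = ((psN pref st.1 g).card : ℝ) * (q : ℝ) := by
            rw [hq]; push_cast; ring
          show (1 - ∑ a, st.2.1 a g) / ((psN pref st.1 g).card : ℝ) * (n.factorial : ℝ) ^ (k+1) = _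
          rw [pow_succ]
          field_simp
          push_cast
          push_cast at hsum
          linear_combination ((n.factorial : ℝ) ^ k - (∑ a, ((f a : ℤ) : ℝ))) * hFq -
            (n.factorial : ℝ) * hsum
        obtain ⟨g0, hg0, hg0t⟩ := Finset.exists_mem_eq_inf' h tg
        obtain ⟨zt1, hzt1⟩ := htg g0 hg0
        have htint : ∃ z : ℤ, t * (n.factorial : ℝ) ^ (k+1) = (z : ℝ) :=
          ⟨zt1, by rw [htdef, hg0t]; exact hzt1⟩
        obtain ⟨zt1', hzt1'⟩ := htint
        constructor
        · exact ⟨zt1', by rw [hdef]; exact hzt1'⟩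
        · intro a g
          rw [hdef]
          simp only
          obtain ⟨w, hw⟩ := hx a g
          by_cases hc : psTop pref st.1 a = some g
          · refine ⟨w * n.factorial + zt1', ?_⟩
            rw [if_pos hc]
            push_cast
            rw [pow_succ]
            linear_combination (n.factorial : ℝ) * hw + hzt1'
          · refine ⟨w * n.factorial, ?_⟩
            rw [if_neg hc]
            push_cast
            rw [pow_succ]
            linear_combination (n.factorial : ℝ) * hw
      · have hdef : psState pref (k+1) = st := by
          rw [psState]
          simp only [← hst, ← htgdef, dif_neg h]
        rw [hdef]
        constructor
        · exact ⟨zt * n.factorial, by push_cast; rw [pow_succ]; linear_combination (n.factorial : ℝ) * hzt⟩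
        · intro a g
          obtain ⟨w, hw⟩ := hx a g
          exact ⟨w * n.factorial, by push_cast; rw [pow_succ]; linear_combination (n.factorial : ℝ) * hw⟩
  exact fun k _ => key k
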